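/- If a is an element of a complex unital Banach algebra A and there exists x ∈ A commuting with a such that a − a²x is quasinilpotent, then setting z = xax, the element z commutes with a, a − a²z is quasinilpotent, and z − z²a is quasinilpotent. -/

import Mathlib

open Filter Finset

/-- An element of a complex (Banach) algebra is quasinilpotent if its spectral radius is zero. -/
noncomputable def Quasinilpotent {A : Type*} [Ring A] [Algebra ℂ A] (q : A) : Prop :=
  spectralRadius ℂ q = 0

/-- `a` has a generalized Drazin inverse: some `b` with `ab = ba`, `b = bab`,
and `a - a²b` quasinilpotent. -/
noncomputable def HasGDrazin {A : Type*} [Ring A] [Algebra ℂ A] (a : A) : Prop :=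
  ∃ b : A, a * b = b * a ∧ b = b * a * b ∧ Quasinilpotent (a - a ^ 2 * b)
open scoped NNReal ENNReal

lemma quasinil_mul_comm {A : Type*} [NormedRing A] [NormedAlgebra ℂ A] [CompleteSpace A]
    {c q : A} (h : Commute c q) (hq : Quasinilpotent q) : Quasinilpotent (c * q) := by
  unfold Quasinilpotent at *
  refine le_antisymm ?_ zero_le
  have h1 : spectralRadius ℂ (c * q) ≤
      atTop.liminf fun n : ℕ => (‖(c * q) ^ n‖₊ : ENNReal) ^ (1 / n : ℝ) :=
    spectrum.spectralRadius_le_liminf_pow_nnnorm_pow_one_div ℂ _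
  have h2 : Tendsto (fun n : ℕ => (‖c‖₊ : ENNReal) * (‖q ^ n‖₊ : ENNReal) ^ (1 / n : ℝ))
      atTop (nhds 0) := by
    have := spectrum.pow_nnnorm_pow_one_div_tendsto_nhds_spectralRadius q
    rw [hq] at this
    simpa using ENNReal.Tendsto.const_mul this (Or.inr ENNReal.coe_ne_top)
  have h3 : ∀ᶠ n : ℕ in atTop, (‖(c * q) ^ n‖₊ : ENNReal) ^ (1 / n : ℝ) ≤
      (‖c‖₊ : ENNReal) * (‖q ^ n‖₊ : ENNReal) ^ (1 / n : ℝ) := by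
    filter_upwards [eventually_ge_atTop 1] with n hn
    have he : (c * q) ^ n = c ^ n * q ^ n := h.mul_pow n
    have hb : (‖(c * q) ^ n‖₊ : ENNReal) ≤ (‖c‖₊ : ENNReal) ^ n * ‖q ^ n‖₊ := by
      rw [he]
      exact_mod_cast (nnnorm_mul_le _ _).trans
        (mul_le_mul_left (nnnorm_pow_le' c hn) _)
    calc (‖(c * q) ^ n‖₊ : ENNReal) ^ (1 / n : ℝ)
        ≤ ((‖c‖₊ : ENNReal) ^ n * ‖q ^ n‖₊) ^ (1 / n : ℝ) := by
          exact ENNReal.rpow_le_rpow hb (by positivity)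
      _ = (‖c‖₊ : ENNReal) * (‖q ^ n‖₊ : ENNReal) ^ (1 / n : ℝ) := by
          rw [ENNReal.mul_rpow_of_nonneg _ _ (by positivity),
            ← ENNReal.rpow_natCast, ← ENNReal.rpow_mul,
            mul_one_div_cancel (by exact_mod_cast Nat.one_le_iff_ne_zero.mp hn : (n : ℝ) ≠ 0),
            ENNReal.rpow_one]
  calc spectralRadius ℂ (c * q) ≤ _ := h1
    _ ≤ atTop.liminf fun n : ℕ => (‖c‖₊ : ENNReal) * (‖q ^ n‖₊ : ENNReal) ^ (1 / n : ℝ) :=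
        liminf_le_liminf h3
    _ = 0 := h2.liminf_eq

theorem stmt1 {A : Type*} [NormedRing A] [NormedAlgebra ℂ A] [CompleteSpace A] (a x : A)
    (hcomm : a * x = x * a) (hq : Quasinilpotent (a - a ^ 2 * x)) :
    a * (x * a * x) = (x * a * x) * a ∧
      Quasinilpotent (a - a ^ 2 * (x * a * x)) ∧
      Quasinilpotent ((x * a * x) - (x * a * x) ^ 2 * a) := by
  have hax : ∀ w : A, a * (x * w) = x * (a * w) := fun w => by
    rw [← mul_assoc, hcomm, mul_assoc]
  have hC : Commute a x := hcomm
  have hCq : Commute x (a - a ^ 2 * x) :=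
    hC.symm.sub_right ((hC.symm.pow_right 2).mul_right (Commute.refl x))
  have hCaq : Commute a (a - a ^ 2 * x) :=
    (Commute.refl a).sub_right (((Commute.refl a).pow_right 2).mul_right hC)
  have hC1 : Commute (1 + a * x) (a - a ^ 2 * x) :=
    (Commute.one_left _).add_left (Commute.mul_left hCaq hCq)
  refine ⟨?_, ?_, ?_⟩
  · exact ((hC.mul_right (Commute.refl a)).mul_right hC).eq
  · have key : a - a ^ 2 * (x * a * x) = (1 + a * x) * (a - a ^ 2 * x) := by
      have h1 : a - a ^ 2 * (x * a * x) = (a - a ^ 2 * x) * (1 + a * x) := by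
        noncomm_ring
      rw [h1]
      exact hC1.eq.symm
    rw [key]
    exact quasinil_mul_comm hC1 hq
  · have key : (x * a * x) - (x * a * x) ^ 2 * a = (x * x * (1 + a * x)) * (a - a ^ 2 * x) := by
      simp only [mul_add, add_mul, mul_sub, sub_mul, mul_one, one_mul, pow_two, mul_assoc,
        hcomm, hax]
      abel
    rw [key]
    exact quasinil_mul_comm (Commute.mul_left (hCq.mul_left hCq) hC1) hq
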